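/- For all 1 ≤ m ≤ r, every generic (r,m)-erasure reducing set A ⊆ F_2^r spans F_2^r; consequently |A| ≥ r. -/

import Mathlib

open Matrix

/-- Hamming weight of a binary vector. -/
def wt {n : ℕ} (v : Fin n → ZMod 2) : ℕ :=
  (Finset.univ.filter (fun j => v j ≠ 0)).card

/-- `A` is a generic `(r,m)`-erasure reducing set. -/
def GenRed (r m : ℕ) (A : Set (Fin r → ZMod 2)) : Prop :=
  ∀ M : Matrix (Fin r) (Fin m) (ZMod 2), M.rank = m →
    ∃ a ∈ A, wt (Matrix.vecMul a M) = 1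

/-- `A` is a generic `(r,m)`-erasure correcting set. -/
def GenCor (r m : ℕ) (A : Set (Fin r → ZMod 2)) : Prop :=
  ∀ m', 1 ≤ m' → m' ≤ m → GenRed r m' A

/-- A vector of weight 1 has coordinate sum 1. -/
lemma sum_eq_one_of_wt_one {n : ℕ} {v : Fin n → ZMod 2} (h : wt v = 1) :
    ∑ j, v j = 1 := by
  classical
  obtain ⟨j, hj⟩ := Finset.card_eq_one.mp h
  have hvj : v j ≠ 0 := by
    have : j ∈ Finset.univ.filter (fun j => v j ≠ 0) := by rw [hj]; simp
    simpa using this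
  have hv : ∀ k, k ≠ j → v k = 0 := by
    intro k hk
    by_contra hvk
    have : k ∈ Finset.univ.filter (fun j => v j ≠ 0) := by simp [hvk]
    rw [hj, Finset.mem_singleton] at this
    exact hk this
  have hone : v j = 1 := by
    have := hvj; revert this; generalize v j = x; revert x; decide
  calc ∑ k, v k = ∑ k ∈ {j}, v k := by
        refine (Finset.sum_subset (Finset.subset_univ _) ?_).symm
        intro k _ hk
        exact hv k (by simpa using hk)
    _ = 1 := by simp [hone]

theorem stmt_7 (r m : ℕ) (hm : 1 ≤ m) (hr : m ≤ r) (A : Set (Fin r → ZMod 2))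
    (hA : GenRed r m A) :
    Submodule.span (ZMod 2) A = ⊤ ∧ r ≤ A.ncard := by
  classical
  have hspan : Submodule.span (ZMod 2) A = ⊤ := by
    by_contra hne
    have hlt : Submodule.span (ZMod 2) A < ⊤ := lt_top_iff_ne_top.mpr hne
    obtain ⟨φ, hφ, hker⟩ :=
      Submodule.exists_dual_map_eq_bot_of_lt_top hlt inferInstance
    set c : Fin r → ZMod 2 := fun i => φ (Pi.single i 1) with hc_def
    have hφc : ∀ v : Fin r → ZMod 2, φ v = ∑ i, v i * c i := by
      intro v
      conv_lhs => rw [pi_eq_sum_univ v]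
      rw [map_sum]
      refine Finset.sum_congr rfl fun i _ => ?_
      have hs : (fun j => if i = j then (1 : ZMod 2) else 0) = Pi.single i 1 := by
        ext j; simp [Pi.single_apply, eq_comm]
      rw [LinearMap.map_smul, smul_eq_mul, hs]
    have hc : c ≠ 0 := by
      intro h0
      apply hφ
      refine LinearMap.ext fun v => ?_
      rw [hφc v]
      simp [h0]
    obtain ⟨i₀, hi₀⟩ : ∃ i, c i ≠ 0 := by
      by_contra h
      push_neg at h
      exact hc (funext h)
    have hi₀1 : c i₀ = 1 := by
      revert hi₀; generalize c i₀ = x; revert x; decide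
    -- an injection σ : Fin m → Fin r with σ j₀ = i₀
    set j₀ : Fin m := ⟨0, hm⟩ with hj₀_def
    set σ : Fin m → Fin r :=
      fun j => Equiv.swap (Fin.castLE hr j₀) i₀ (Fin.castLE hr j) with hσ_def
    have hσinj : Function.Injective σ :=
      (Equiv.injective _).comp (Fin.castLE_injective hr)
    have hσ0 : σ j₀ = i₀ := by simp [hσ_def]
    -- the columns of our matrix
    set cols : Fin m → (Fin r → ZMod 2) :=
      fun j => if j = j₀ then c + ∑ k ∈ Finset.univ.filter (· ≠ j₀), Pi.single (σ k) 1
               else Pi.single (σ j) 1 with hcols_def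
    have hcols_j0_at : ∀ j, j ≠ j₀ → cols j i₀ = 0 := by
      intro j hj
      simp only [hcols_def, if_neg hj]
      rw [← hσ0]
      exact Pi.single_eq_of_ne (fun h => hj (hσinj h).symm) 1
    have hcols_at_i0 : cols j₀ i₀ = 1 := by
      simp only [hcols_def, if_pos rfl, Pi.add_apply]
      rw [hi₀1]
      have : ∀ k ∈ Finset.univ.filter (· ≠ j₀),
          (Pi.single (σ k) 1 : Fin r → ZMod 2) i₀ = 0 := by
        intro k hk
        rw [← hσ0]
        exact Pi.single_eq_of_ne (fun h => (Finset.mem_filter.mp hk).2 (hσinj h).symm) 1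
      rw [Finset.sum_apply, Finset.sum_congr rfl this]
      simp
    have hindep : LinearIndependent (ZMod 2) cols := by
      rw [Fintype.linearIndependent_iff]
      intro g hg
      have hg0 : g j₀ = 0 := by
        have := congrFun hg i₀
        simp only [Finset.sum_apply, Pi.smul_apply, Pi.zero_apply] at this
        rw [Finset.sum_eq_single j₀ (fun k _ hk => by
          rw [hcols_j0_at k hk]; simp) (by simp)] at this
        rw [hcols_at_i0] at this
        simpa using this
      intro j
      by_cases hj : j = j₀
      · rw [hj]; exact hg0
      · have := congrFun hg (σ j)
        simp only [Finset.sum_apply, Pi.smul_apply, Pi.zero_apply] at this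
        rw [Finset.sum_eq_single j (fun k _ hk => ?_) (by simp)] at this
        · simp only [hcols_def, if_neg hj] at this
          rw [Pi.single_eq_same] at this
          simpa using this
        · by_cases hkj : k = j₀
          · rw [hkj, hg0, zero_smul]
          · simp only [hcols_def, if_neg hkj, smul_eq_mul]
            rw [Pi.single_eq_of_ne (fun h => hk (hσinj h).symm) 1]
            simp
    -- the matrix
    set M : Matrix (Fin r) (Fin m) (ZMod 2) := Matrix.of (fun i j => cols j i) with hM_def
    have hMT : Mᵀ = cols := by ext j i; rfl
    have hrank : M.rank = m := by
      rw [Matrix.rank_eq_finrank_span_cols, (show M.col = cols from hMT), finrank_span_eq_card hindep,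
        Fintype.card_fin]
    obtain ⟨a, haA, hwt⟩ := hA M hrank
    -- a is orthogonal to c
    have haφ : φ a = 0 := by
      have : φ a ∈ (Submodule.span (ZMod 2) A).map φ :=
        ⟨a, Submodule.subset_span haA, rfl⟩
      rw [hker] at this
      exact (Submodule.mem_bot (ZMod 2)).mp this
    -- sum of the columns is c
    have hsumcols : ∑ j, cols j = c := by
      rw [← Finset.add_sum_erase _ _ (Finset.mem_univ j₀)]
      have h1 : cols j₀ = c + ∑ k ∈ Finset.univ.filter (· ≠ j₀), Pi.single (σ k) 1 := by
        simp [hcols_def]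
      have h2 : ∑ j ∈ Finset.univ.erase j₀, cols j
          = ∑ k ∈ Finset.univ.filter (· ≠ j₀), Pi.single (σ k) (1 : ZMod 2) := by
        rw [show Finset.univ.filter (· ≠ j₀) = Finset.univ.erase j₀ by
          ext k; simp [Finset.mem_erase, and_comm]]
        refine Finset.sum_congr rfl fun k hk => ?_
        simp [hcols_def, (Finset.mem_erase.mp hk).1]
      rw [h1, h2, add_assoc, ← two_smul (ZMod 2)]
      have : (2 : ZMod 2) = 0 := by decide
      rw [this, zero_smul, add_zero]
    -- the coordinate sum of vecMul a M is φ a = 0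
    have hsum : ∑ j, Matrix.vecMul a M j = 0 := by
      have h1 : ∀ j, Matrix.vecMul a M j = ∑ i, a i * cols j i := by
        intro j
        simp [Matrix.vecMul, dotProduct, hM_def]
      calc ∑ j, Matrix.vecMul a M j = ∑ j, ∑ i, a i * cols j i := by
            exact Finset.sum_congr rfl fun j _ => h1 j
        _ = ∑ i, a i * (∑ j, cols j i) := by
            rw [Finset.sum_comm]
            exact Finset.sum_congr rfl fun i _ => by rw [Finset.mul_sum]
        _ = ∑ i, a i * c i := by
            refine Finset.sum_congr rfl fun i _ => ?_
            rw [← hsumcols]; simp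
        _ = φ a := (hφc a).symm
        _ = 0 := haφ
    rw [sum_eq_one_of_wt_one hwt] at hsum
    exact one_ne_zero hsum
  refine ⟨hspan, ?_⟩
  haveI : Fintype A := Fintype.ofFinite A
  have h1 : Module.finrank (ZMod 2) (Fin r → ZMod 2) = r := by
    simp [Module.finrank_pi]
  have h2 : Module.finrank (ZMod 2) (Submodule.span (ZMod 2) A) ≤ A.toFinset.card :=
    finrank_span_le_card A
  rw [hspan] at h2
  rw [Set.ncard_eq_toFinset_card']
  calc r = Module.finrank (ZMod 2) (Fin r → ZMod 2) := h1.symm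
    _ = Module.finrank (ZMod 2) (⊤ : Submodule (ZMod 2) (Fin r → ZMod 2)) :=
        (finrank_top _ _).symm
    _ ≤ A.toFinset.card := h2
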